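/- Fix any w ∈ ℝ^L and ε > 0. Let w_{[1]} ≥ … ≥ w_{[L]} denote the order statistics of w, and define k̂(w) = max{ k ∈ [L] : (Σ_{ℓ=1}^k (w_{[ℓ]} − w_{[k]}))² + Σ_{ℓ=1}^k (w_{[ℓ]} − w_{[k]})² ≤ ε² }. Then argmax^ε(w) = { j ∈ [L] : w_j > ε/√2 + Â₁(w) − √(k̂(w)+1) · √( ε²/k̂(w) + (Â₁(w))² − Â₂(w) ) }, where Â₁(w) = (w_{[1]} + … + w_{[k̂(w)]})/k̂(w) and Â₂(w) = (w_{[1]}² + … + w_{[k̂(w)]}²)/k̂(w). -/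

import Mathlib

noncomputable section

/-- The set `R_j^ε = {w ∈ ℝ^L : w_j ≥ max_{ℓ≠j} w_ℓ + ε/√2}`. -/
def Rset (L : ℕ) (ε : ℝ) (j : Fin L) : Set (EuclideanSpace ℝ (Fin L)) :=
  {w | ∀ ℓ : Fin L, ℓ ≠ j → w ℓ + ε / Real.sqrt 2 ≤ w j}

/-- The inflated argmax: `argmax^ε(w) = {j ∈ [L] : dist(w, R_j^ε) < ε}`. -/
def inflatedArgmax (L : ℕ) (ε : ℝ) (w : EuclideanSpace ℝ (Fin L)) : Set (Fin L) :=
  {j | Metric.infDist w (Rset L ε j) < ε}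

set_option maxHeartbeats 8000000 in
/-- Computing the inflated argmax.  Here `σ` is a permutation sorting the entries of `w`
in nonincreasing order, so that `w (σ ℓ)` is the `(ℓ+1)`-st order statistic `w_{[ℓ+1]}`,
and `k0 : Fin L` is such that `k̂(w) = k0 + 1` is the largest `k ∈ [L]` satisfying
`(Σ_{ℓ=1}^k (w_{[ℓ]} − w_{[k]}))² + Σ_{ℓ=1}^k (w_{[ℓ]} − w_{[k]})² ≤ ε²`.
Then `argmax^ε(w) = {j : w_j > ε/√2 + Â₁ − √(k̂+1)·√(ε²/k̂ + Â₁² − Â₂)}`,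
where `Â₁ = (w_{[1]} + … + w_{[k̂]})/k̂` and `Â₂ = (w_{[1]}² + … + w_{[k̂]}²)/k̂`. -/
theorem inflatedArgmax_compute (L : ℕ) (hL : 2 ≤ L) (ε : ℝ) (hε : 0 < ε)
    (w : EuclideanSpace ℝ (Fin L)) (σ : Equiv.Perm (Fin L))
    (hsort : Antitone fun i : Fin L => w (σ i))
    (k0 : Fin L)
    (hk0 : IsGreatest {k : Fin L |
        (∑ ℓ ∈ Finset.Iic k, (w (σ ℓ) - w (σ k)))^2
          + ∑ ℓ ∈ Finset.Iic k, (w (σ ℓ) - w (σ k))^2 ≤ ε^2} k0) :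
    inflatedArgmax L ε w =
      {j : Fin L | w j > ε / Real.sqrt 2
        + (∑ ℓ ∈ Finset.Iic k0, w (σ ℓ)) / (((k0 : ℕ) : ℝ) + 1)
        - Real.sqrt (((k0 : ℕ) : ℝ) + 2)
          * Real.sqrt (ε^2 / (((k0 : ℕ) : ℝ) + 1)
            + ((∑ ℓ ∈ Finset.Iic k0, w (σ ℓ)) / (((k0 : ℕ) : ℝ) + 1))^2
            - (∑ ℓ ∈ Finset.Iic k0, (w (σ ℓ))^2) / (((k0 : ℕ) : ℝ) + 1))} := by
  classical
  have hsqrt2 : (0:ℝ) < Real.sqrt 2 := by positivity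
  set c : ℝ := ε / Real.sqrt 2 with hc
  have hc_pos : 0 < c := div_pos hε hsqrt2
  have hc2 : c^2 = ε^2/2 := by
    rw [hc, div_pow, Real.sq_sqrt (by norm_num : (0:ℝ) ≤ 2)]
  set K : Finset (Fin L) := Finset.Iic k0 with hK
  set kk : ℝ := ((k0 : ℕ) : ℝ) + 1 with hkk
  have hkk1 : 1 ≤ kk := by
    rw [hkk]
    have : (0:ℝ) ≤ ((k0:ℕ):ℝ) := Nat.cast_nonneg _
    linarith
  have hkk0 : (0:ℝ) < kk := by linarith
  have hcard : ((K.card : ℝ)) = kk := by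
    rw [hK, Fin.card_Iic, hkk]; push_cast; ring
  set S : ℝ := ∑ ℓ ∈ K, w (σ ℓ) with hS
  set Q : ℝ := ∑ ℓ ∈ K, (w (σ ℓ))^2 with hQ
  set N : ℝ := kk*ε^2 + S^2 - kk*Q with hN
  set m : ℝ := w (σ k0) with hm
  clear_value c K kk S Q N m
  -- generic sum expansions
  have hsum_lin : ∀ a : ℝ, ∑ ℓ ∈ K, (w (σ ℓ) - a) = S - kk*a := by
    intro a
    rw [Finset.sum_sub_distrib, Finset.sum_const, ← hS, nsmul_eq_mul, hcard]
  have hsum_sq : ∀ a : ℝ, ∑ ℓ ∈ K, (w (σ ℓ) - a)^2 = Q - 2*a*S + kk*a^2 := by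
    intro a
    have h1 : ∀ ℓ ∈ K, (w (σ ℓ) - a)^2 = (w (σ ℓ))^2 - (2*a) * (w (σ ℓ)) + a^2 := by
      intro ℓ _; ring
    rw [Finset.sum_congr rfl h1, Finset.sum_add_distrib, Finset.sum_sub_distrib,
      ← Finset.mul_sum, Finset.sum_const, ← hS, ← hQ, nsmul_eq_mul, hcard]
  have hmK : ∀ i ∈ K, m ≤ w (σ i) := by
    intro i hi
    rw [hK] at hi
    rw [hm]
    exact hsort (Finset.mem_Iic.mp hi)
  -- membership inequality
  have hmem : (S - kk*m)^2 + (Q - 2*m*S + kk*m^2) ≤ ε^2 := by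
    have h := hk0.1
    simp only [Set.mem_setOf_eq] at h
    rwa [← hm, ← hK, hsum_lin m, hsum_sq m] at h
  have hP0 : 0 ≤ S - kk*m := by
    rw [← hsum_lin m]
    exact Finset.sum_nonneg (fun i hi => by linarith [hmK i hi])
  have hkey1 : (kk+1)*(S - kk*m)^2 ≤ N := by nlinarith only [hmem, hkk0, hN]
  have hN0 : 0 ≤ N := le_trans (by positivity) hkey1
  set γ : ℝ := Real.sqrt (N/(kk+1)) with hγ
  clear_value γ
  have hγ0 : 0 ≤ γ := by rw [hγ]; positivity
  have hγ2 : (kk+1)*γ^2 = N := by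
    rw [hγ, Real.sq_sqrt (div_nonneg hN0 (by linarith))]
    field_simp
  have hPγ : S - kk*m ≤ γ := by
    have hsq : (S - kk*m)^2 ≤ γ^2 := by nlinarith only [hkey1, hγ2, hkk0]
    nlinarith only [hsq, hγ0, hP0]
  set sstar : ℝ := (S - γ)/kk with hsstar
  clear_value sstar
  have hks : kk * sstar = S - γ := by rw [hsstar]; field_simp
  have hms : sstar ≤ m := by
    rw [hsstar, div_le_iff₀ hkk0]; linarith only [hPγ]
  have hsmK : ∀ i ∈ K, sstar ≤ w (σ i) := fun i hi => le_trans hms (hmK i hi)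
  -- variance bound and γ ≥ c
  have hVP : Q - 2*m*S + kk*m^2 ≤ (S - kk*m)^2 := by
    rw [← hsum_sq m, ← hsum_lin m]
    have h1 : ∀ i ∈ K, (w (σ i) - m)^2 ≤ (w (σ i) - m) * (∑ ℓ ∈ K, (w (σ ℓ) - m)) := by
      intro i hi
      have h2 : w (σ i) - m ≤ ∑ ℓ ∈ K, (w (σ ℓ) - m) := by
        exact Finset.single_le_sum (f := fun ℓ => w (σ ℓ) - m)
          (fun ℓ hℓ => by simpa using sub_nonneg.mpr (hmK ℓ hℓ)) hi
      nlinarith only [hmK i hi, h2]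
    calc ∑ ℓ ∈ K, (w (σ ℓ) - m)^2
        ≤ ∑ i ∈ K, (w (σ i) - m) * (∑ ℓ ∈ K, (w (σ ℓ) - m)) := Finset.sum_le_sum h1
      _ = (∑ ℓ ∈ K, (w (σ ℓ) - m))^2 := by rw [← Finset.sum_mul]; ring
  have hγc : c ≤ γ := by
    have hprod : 0 ≤ (kk - 1) * (ε^2 - ((S - kk*m)^2 + (Q - 2*m*S + kk*m^2))) :=
      mul_nonneg (by linarith only [hkk1]) (by linarith only [hmem])
    have h2 : (kk+1)*ε^2 ≤ 2*N := by nlinarith only [hVP, hprod, hmem, hN, hkk1]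
    have h3 : c^2 ≤ γ^2 := by
      rw [hc2]; nlinarith only [hγ2, hkk0, h2]
    nlinarith only [h3, hc_pos, hγ0]
  have hγpos : 0 < γ := lt_of_lt_of_le hc_pos hγc
  -- entries outside K are < sstar (maximality of k0)
  have hout : ∀ i : Fin L, i ∉ K → w (σ i) < sstar := by
    intro i hiK
    have hik : (k0:ℕ) < (i:ℕ) := by
      by_contra h
      push_neg at h
      exact hiK (by rw [hK]; exact Finset.mem_Iic.mpr (Fin.le_def.mpr h))
    have hk1L : (k0:ℕ)+1 < L := lt_of_le_of_lt (Nat.succ_le_of_lt hik) i.isLt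
    set k1 : Fin L := ⟨(k0:ℕ)+1, hk1L⟩ with hk1
    clear_value k1
    have hk0k1 : k0 < k1 := by
      rw [Fin.lt_def]; simp [hk1]
    have hnotmem : ¬ ((∑ ℓ ∈ Finset.Iic k1, (w (σ ℓ) - w (σ k1)))^2
        + ∑ ℓ ∈ Finset.Iic k1, (w (σ ℓ) - w (σ k1))^2 ≤ ε^2) := by
      intro hmem1
      exact absurd (hk0.2 hmem1) (not_le.mpr hk0k1)
    set m' : ℝ := w (σ k1) with hm'
    clear_value m'
    have hk1K : k1 ∉ K := by
      rw [hK]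
      simp only [Finset.mem_Iic, Fin.le_def, hk1]
      omega
    have hIic1 : Finset.Iic k1 = insert k1 K := by
      rw [hK]
      ext x
      simp only [Finset.mem_Iic, Finset.mem_insert, Fin.le_def, Fin.ext_iff, hk1]
      omega
    have hsum1 : ∑ ℓ ∈ Finset.Iic k1, (w (σ ℓ) - m') = S - kk*m' := by
      rw [hIic1, Finset.sum_insert hk1K, hsum_lin m', ← hm']; ring
    have hsum2 : ∑ ℓ ∈ Finset.Iic k1, (w (σ ℓ) - m')^2 = Q - 2*m'*S + kk*m'^2 := by
      rw [hIic1, Finset.sum_insert hk1K, hsum_sq m', ← hm']; ring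
    have hfail : ε^2 < (S - kk*m')^2 + (Q - 2*m'*S + kk*m'^2) := by
      have := not_le.mp hnotmem
      rwa [hsum1, hsum2] at this
    have hm'm : m' ≤ m := by
      have h := hsort (le_of_lt hk0k1)
      simp only at h
      rw [← hm', ← hm] at h
      exact h
    clear hnotmem hIic1 hsum1 hsum2
    have hP'0 : 0 ≤ S - kk*m' := by
      have h1 : 0 ≤ kk*(m - m') := mul_nonneg hkk0.le (by linarith only [hm'm])
      nlinarith only [hP0, h1]
    have hkey2 : N < (kk+1)*(S - kk*m')^2 := by nlinarith only [hfail, hkk0, hN]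
    have hgt : γ < S - kk*m' := by
      have hsq : γ^2 < (S - kk*m')^2 := by nlinarith only [hkey2, hγ2, hkk0]
      nlinarith only [hsq, hγ0, hP'0]
    have him : w (σ i) ≤ m' := by
      rw [hm']
      refine hsort ?_
      rw [Fin.le_def]
      simp only [hk1]
      omega
    have hm's : m' < sstar := by
      rw [hsstar, lt_div_iff₀ hkk0]; linarith only [hgt]
    linarith only [him, hm's]
  -- threshold identity
  have hτ : c + S/kk - Real.sqrt (((k0:ℕ):ℝ) + 2) * Real.sqrt (ε^2/kk + (S/kk)^2 - Q/kk)
      = sstar + c - γ := by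
    have h2 : ((k0:ℕ):ℝ) + 2 = kk + 1 := by rw [hkk]; ring
    have h3 : ε^2/kk + (S/kk)^2 - Q/kk = N/kk^2 := by
      rw [hN]; field_simp
    rw [h2, h3]
    have h4 : Real.sqrt (N/kk^2) = Real.sqrt N / kk := by
      rw [Real.sqrt_div hN0, Real.sqrt_sq hkk0.le]
    have hγN : γ * Real.sqrt (kk+1) = Real.sqrt N := by
      rw [hγ, ← Real.sqrt_mul (div_nonneg hN0 (by linarith))]
      congr 1
      field_simp
    have h5 : Real.sqrt (kk+1) * Real.sqrt (N/kk^2) = (kk+1) * γ / kk := by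
      rw [h4, ← hγN]
      have hsq1 : Real.sqrt (kk+1) * Real.sqrt (kk+1) = kk+1 :=
        Real.mul_self_sqrt (by linarith)
      field_simp
      linear_combination hsq1
    rw [h5, hsstar]
    field_simp
    ring
  -- W identity
  have e1 : kk*Q = kk*ε^2 + S^2 - (kk+1)*γ^2 := by
    rw [hN] at hγ2; linarith only [hγ2]
  have hW : Q - 2*sstar*S + kk*sstar^2 = ε^2 - γ^2 := by
    have h6 : kk*(Q - 2*sstar*S + kk*sstar^2) = kk*(ε^2 - γ^2) := by
      linear_combination e1 + (kk*sstar + S - γ - 2*S) * hks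
    exact mul_left_cancel₀ (ne_of_gt hkk0) h6
  -- nonemptiness of Rset
  have hne : ∀ j : Fin L, (Rset L ε j).Nonempty := by
    intro j
    refine ⟨WithLp.toLp 2 (fun ℓ => if ℓ = j then c else 0), ?_⟩
    intro ℓ hℓ
    simp only [PiLp.toLp_apply, if_neg hℓ, if_pos rfl, if_true, eq_self_iff_true]
    rw [← hc]
    linarith only []
  -- main extensionality
  ext j
  simp only [inflatedArgmax, Set.mem_setOf_eq]
  rw [Metric.infDist_lt_iff (hne j)]
  simp only [← hkk]
  rw [hτ]
  set T : Finset (Fin L) := K.image σ with hT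
  clear_value T
  constructor
  · -- forward: some v ∈ Rset close to w implies w j > sstar + c - γ
    rintro ⟨v, hvR, hvlt⟩
    have hvR' : ∀ ℓ : Fin L, ℓ ≠ j → v ℓ + c ≤ v j := by
      intro ℓ hℓ
      have := hvR ℓ hℓ
      rwa [← hc] at this
    have hsum : ∑ i, (w i - v i)^2 < ε^2 := by
      rw [EuclideanSpace.dist_eq] at hvlt
      have h2 := (Real.sqrt_lt' hε).mp hvlt
      calc ∑ i, (w i - v i)^2 = ∑ i, dist (w i) (v i)^2 :=
            Finset.sum_congr rfl (fun i _ => by rw [Real.dist_eq, sq_abs])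
        _ < ε^2 := h2
    by_cases hjT : σ.symm j ∈ K
    · -- j among the top k entries
      by_cases hwτ : sstar + c - γ < w j
      · exact hwτ
      exfalso
      push_neg at hwτ
      have hwjm : m ≤ w j := by
        have := hmK _ hjT
        rwa [Equiv.apply_symm_apply] at this
      have h1 : w j ≤ sstar := by linarith only [hγc, hwτ]
      have hmeq : sstar = m := le_antisymm hms (by linarith only [hwjm, h1])
      have hwj : w j = m := le_antisymm (by linarith only [h1, hmeq]) hwjm
      have hγceq : γ = c := le_antisymm (by linarith only [hwτ, hwjm, hmeq]) hγc
      -- kk ≥ 2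
      have hkk2 : 2 ≤ kk := by
        by_contra h
        push_neg at h
        have hk00 : (k0:ℕ) = 0 := by
          rw [hkk] at h
          by_contra h2
          have : (1:ℝ) ≤ ((k0:ℕ):ℝ) := by exact_mod_cast Nat.one_le_iff_ne_zero.mpr h2
          linarith only [this, h]
        have hK0 : K = {k0} := by
          rw [hK]
          ext x
          simp only [Finset.mem_Iic, Finset.mem_singleton, Fin.le_def, Fin.ext_iff, hk00]
          omega
        have hSm : S = m := by rw [hS, hK0, Finset.sum_singleton, hm]
        have hkk1' : kk = 1 := by rw [hkk, hk00]; norm_num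
        have hγ00 : γ = 0 := by
          have := hks
          rw [hkk1', one_mul, hmeq, hSm] at this
          linarith only [this]
        linarith only [hγpos, hγ00]
      -- P = c, V = c²
      have hNc : N = (kk+1)*c^2 := by rw [← hγ2, hγceq]
      have hQS : kk*Q - S^2 = (kk-1)*c^2 := by
        rw [hN] at hNc
        have hc2k : kk*c^2 = kk*ε^2/2 := by rw [hc2]; ring
        linarith only [hNc, hc2k]
      have hidV : kk*(Q - 2*m*S + kk*m^2) - (S - kk*m)^2 = kk*Q - S^2 := by ring
      have hPle : (S - kk*m)^2 ≤ c^2 := by nlinarith only [hkey1, hNc, hkk0]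
      have hPc : S - kk*m = c := by
        have hc2' : c^2 ≤ (S-kk*m)^2 := by nlinarith only [hVP, hidV, hQS, hPle, hkk2]
        have ha : S - kk*m ≤ c := by nlinarith only [hPle, hP0, hc_pos]
        have hb : c ≤ S - kk*m := by nlinarith only [hc2', hP0, hc_pos]
        linarith only [ha, hb]
      have hPc2 : (S - kk*m)^2 = c^2 := by rw [hPc]
      have hVc : Q - 2*m*S + kk*m^2 = c^2 := by
        have h6 : kk*(Q - 2*m*S + kk*m^2) = kk*(c^2) := by linarith only [hidV, hQS, hPc2]
        exact mul_left_cancel₀ (ne_of_gt hkk0) h6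
      -- the top entry is m + c
      have hL0 : 0 < L := by omega
      set z : Fin L := ⟨0, hL0⟩ with hz
      clear_value z
      have hzle : ∀ i : Fin L, z ≤ i := by
        intro i
        rw [hz]
        exact Fin.le_def.mpr (Nat.zero_le _)
      have hzK : z ∈ K := by
        rw [hK]
        exact Finset.mem_Iic.mpr (hzle k0)
      have hx0max : ∀ i ∈ K, w (σ i) ≤ w (σ z) :=
        fun i _ => hsort (hzle i)
      have hx0c : w (σ z) = m + c := by
        have hsumx : ∑ i ∈ K, (w (σ i) - m) = c := by rw [hsum_lin]; linarith only [hPc]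
        have hsumx2 : ∑ i ∈ K, (w (σ i) - m)^2 = c^2 := by rw [hsum_sq]; linarith only [hVc]
        have hub : w (σ z) - m ≤ c := by
          rw [← hsumx]
          exact Finset.single_le_sum (f := fun i => w (σ i) - m)
            (fun i hi => by simpa using sub_nonneg.mpr (hmK i hi)) hzK
        have hlb : c ≤ w (σ z) - m := by
          have h1 : ∀ i ∈ K, (w (σ i) - m)^2 ≤ (w (σ z) - m) * (w (σ i) - m) := by
            intro i hi
            nlinarith only [hmK i hi, hx0max i hi]
          have h2 : c^2 ≤ (w (σ z) - m) * c := by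
            calc c^2 = ∑ i ∈ K, (w (σ i) - m)^2 := hsumx2.symm
              _ ≤ ∑ i ∈ K, (w (σ z) - m) * (w (σ i) - m) := Finset.sum_le_sum h1
              _ = (w (σ z) - m) * c := by rw [← Finset.mul_sum, hsumx]
          nlinarith only [hc_pos, h2]
        linarith only [hub, hlb]
      have hzj : σ z ≠ j := by
        intro h
        have : w (σ z) = w j := by rw [h]
        rw [hx0c, hwj] at this
        linarith only [this, hc_pos]
      have hsum2' : (w j - v j)^2 + (w (σ z) - v (σ z))^2 ≤ ∑ i, (w i - v i)^2 := by
        have hpair : ∑ i ∈ ({j, σ z} : Finset (Fin L)), (w i - v i)^2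
            = (w j - v j)^2 + (w (σ z) - v (σ z))^2 :=
          Finset.sum_pair (Ne.symm hzj)
        rw [← hpair]
        exact Finset.sum_le_sum_of_subset_of_nonneg (Finset.subset_univ _)
          (fun i _ _ => sq_nonneg _)
      have hvz : v (σ z) + c ≤ v j := hvR' _ hzj
      -- contradiction
      rw [hwj, hx0c] at hsum2'
      nlinarith only [hsum, hsum2', hc2, sq_nonneg (v j - m - c),
        sq_nonneg (m - v (σ z)),
        mul_nonneg hc_pos.le
          (by linarith only [hvz] : (0:ℝ) ≤ (m + c - v (σ z)) - (m + 2*c - v j))]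
    · -- j not among the top k entries: dual certificate
      set s : ℝ := v j - c with hs
      clear_value s
      have hσj : ∀ i ∈ K, σ i ≠ j := by
        intro i hi h
        apply hjT
        rw [← h, Equiv.symm_apply_apply]
        exact hi
      have hvle : ∀ i ∈ K, v (σ i) ≤ s := by
        intro i hi
        have := hvR' (σ i) (hσj i hi)
        rw [hs]; linarith only [this]
      have hterm : ∀ i ∈ K, 2*(w (σ i) - sstar)*(w (σ i) - s) - (w (σ i) - sstar)^2
          ≤ (w (σ i) - v (σ i))^2 := by
        intro i hi
        have h1 := hsmK i hi
        have h2 := hvle i hi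
        nlinarith only [sq_nonneg (w (σ i) - v (σ i) - (w (σ i) - sstar)),
          mul_nonneg (by linarith only [h1] : (0:ℝ) ≤ w (σ i) - sstar)
            (by linarith only [h2] : (0:ℝ) ≤ (w (σ i) - v (σ i)) - (w (σ i) - s))]
      have hjT' : j ∉ T := by
        intro h
        rw [hT] at h
        obtain ⟨i, hi, hij⟩ := Finset.mem_image.mp h
        apply hjT
        rw [← hij, Equiv.symm_apply_apply]
        exact hi
      have hsplit : (w j - v j)^2 + ∑ i ∈ K, (w (σ i) - v (σ i))^2
          ≤ ∑ i, (w i - v i)^2 := by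
        have h1 : ∑ i ∈ K, (w (σ i) - v (σ i))^2 = ∑ ℓ ∈ T, (w ℓ - v ℓ)^2 := by
          rw [hT]
          have h2 : ∑ ℓ ∈ Finset.image (⇑σ) K, (w ℓ - v ℓ)^2
              = ∑ i ∈ K, (w (σ i) - v (σ i))^2 :=
            Finset.sum_image (fun a _ b _ h => σ.injective h)
          exact h2.symm
        rw [h1]
        calc (w j - v j)^2 + ∑ ℓ ∈ T, (w ℓ - v ℓ)^2
            = ∑ ℓ ∈ insert j T, (w ℓ - v ℓ)^2 := (Finset.sum_insert (f := fun ℓ => (w ℓ - v ℓ)^2) hjT').symm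
          _ ≤ ∑ i, (w i - v i)^2 :=
            Finset.sum_le_sum_of_subset_of_nonneg (Finset.subset_univ _)
              (fun i _ _ => sq_nonneg _)
      have hclosed : ∑ i ∈ K, (2*(w (σ i) - sstar)*(w (σ i) - s) - (w (σ i) - sstar)^2)
          = Q - 2*s*S + kk*(2*sstar*s - sstar^2) := by
        have h1 : ∀ i ∈ K, 2*(w (σ i) - sstar)*(w (σ i) - s) - (w (σ i) - sstar)^2
            = (w (σ i))^2 - (2*s)*(w (σ i)) + (2*sstar*s - sstar^2) := by
          intro i _; ring
        rw [Finset.sum_congr rfl h1, Finset.sum_add_distrib, Finset.sum_sub_distrib,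
          ← Finset.mul_sum, Finset.sum_const, ← hS, ← hQ, nsmul_eq_mul, hcard]
      have hfirst : 2*γ*(s + c - w j) - γ^2 ≤ (w j - v j)^2 := by
        have hvj : v j = s + c := by rw [hs]; ring
        rw [hvj]
        nlinarith only [sq_nonneg (w j - s - c + γ)]
      have hkey : 2*γ*(s + c - w j) - γ^2 + (Q - 2*s*S + kk*(2*sstar*s - sstar^2)) < ε^2 := by
        have h4 := Finset.sum_le_sum hterm
        rw [hclosed] at h4
        linarith only [hsplit, hsum, hfirst, h4]
      have hz2 : 2*s*(γ - S + kk*sstar) = 0 := by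
        have : γ - S + kk*sstar = 0 := by linarith only [hks]
        rw [this]; ring
      have hkey2 : 2*γ*(c - w j) - γ^2 + Q - kk*sstar^2 < ε^2 := by nlinarith only [hkey, hz2]
      have e2 : kk^2*sstar^2 = (S - γ)^2 := by
        have : (kk*sstar)^2 = (S - γ)^2 := by rw [hks]
        linarith only [this]
      have h6 : kk*(2*γ*(c - w j) - γ^2 + Q - kk*sstar^2) < kk*ε^2 :=
        (mul_lt_mul_iff_right₀ hkk0).mpr hkey2
      have h7 : 2*γ*(kk*c - kk*(w j) - (kk+1)*γ + S) < 0 := by nlinarith only [h6, e1, e2]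
      have h8 : kk*c - kk*(w j) - (kk+1)*γ + S < 0 := by nlinarith only [h7, hγpos]
      have h9 : (S - γ)/kk < w j - c + γ := by
        rw [div_lt_iff₀ hkk0]; linarith only [h8]
      rw [hsstar]
      linarith only [h9]
  · -- backward: construct the projection point
    intro hj
    set v : EuclideanSpace ℝ (Fin L) :=
      WithLp.toLp 2 (fun ℓ => if ℓ = j then max (w j) (sstar + c) else min (w ℓ) sstar) with hv
    have hvj : v j = max (w j) (sstar + c) := by rw [hv]; simp
    have hvℓ : ∀ ℓ : Fin L, ℓ ≠ j → v ℓ = min (w ℓ) sstar := by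
      intro ℓ hℓ
      rw [hv]
      simp [hℓ]
    have hvR : v ∈ Rset L ε j := by
      intro ℓ hℓ
      rw [hvj, hvℓ ℓ hℓ, ← hc]
      have h1 := min_le_right (w ℓ) sstar
      have h2 := le_max_right (w j) (sstar + c)
      linarith only [h1, h2]
    refine ⟨v, hvR, ?_⟩
    rw [EuclideanSpace.dist_eq, Real.sqrt_lt' hε]
    have hrw : ∑ i, dist (w i) (v i)^2 = ∑ i, (w i - v i)^2 :=
      Finset.sum_congr rfl (fun i _ => by rw [Real.dist_eq, sq_abs])
    rw [hrw]
    have hjmem : j ∈ (Finset.univ : Finset (Fin L)) := Finset.mem_univ j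
    rw [show (∑ i, (w i - v i)^2)
        = (∑ ℓ ∈ Finset.univ.erase j, (w ℓ - v ℓ)^2) + (w j - v j)^2 by
      rw [Finset.sum_erase_eq_sub hjmem]; ring]
    have hsub : T.erase j ⊆ Finset.univ.erase j :=
      Finset.erase_subset_erase j (Finset.subset_univ T)
    have hrest : ∑ ℓ ∈ Finset.univ.erase j, (w ℓ - v ℓ)^2
        = ∑ ℓ ∈ T.erase j, (w ℓ - sstar)^2 := by
      rw [← Finset.sum_subset hsub ?_]
      · refine Finset.sum_congr rfl (fun ℓ hℓ => ?_)
        obtain ⟨hℓj, hℓT⟩ := Finset.mem_erase.mp hℓ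
        have hℓs : sstar ≤ w ℓ := by
          rw [hT] at hℓT
          obtain ⟨i, hi, rfl⟩ := Finset.mem_image.mp hℓT
          exact hsmK i hi
        rw [hvℓ ℓ hℓj, min_eq_right hℓs]
      · intro ℓ hℓu hℓT
        have hℓj : ℓ ≠ j := (Finset.mem_erase.mp hℓu).1
        have hℓT' : ℓ ∉ T := fun h => hℓT (Finset.mem_erase.mpr ⟨hℓj, h⟩)
        have hwℓ : w ℓ < sstar := by
          have h2 : σ.symm ℓ ∉ K := by
            intro h
            exact hℓT' (by
              rw [hT]
              exact Finset.mem_image.mpr ⟨σ.symm ℓ, h, Equiv.apply_symm_apply σ ℓ⟩)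
          have := hout (σ.symm ℓ) h2
          rwa [Equiv.apply_symm_apply] at this
        rw [hvℓ ℓ hℓj, min_eq_left hwℓ.le]
        ring
    rw [hrest]
    have hTsum : ∑ ℓ ∈ T, (w ℓ - sstar)^2 = ε^2 - γ^2 := by
      rw [hT, Finset.sum_image (fun a _ b _ h => σ.injective h), hsum_sq sstar, hW]
    by_cases hjT : σ.symm j ∈ K
    · have hjT' : j ∈ T := by
        rw [hT]
        exact Finset.mem_image.mpr ⟨σ.symm j, hjT, Equiv.apply_symm_apply σ j⟩
      have hTsum' : ∑ ℓ ∈ T.erase j, (w ℓ - sstar)^2 = (ε^2 - γ^2) - (w j - sstar)^2 := by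
        rw [Finset.sum_erase_eq_sub hjT', hTsum]
      have hwjs : sstar ≤ w j := by
        have := hsmK _ hjT
        rwa [Equiv.apply_symm_apply] at this
      rw [hTsum']
      rcases le_total (sstar + c) (w j) with hcase | hcase
      · rw [hvj, max_eq_left hcase]
        nlinarith only [hγpos, sq_nonneg (w j - sstar)]
      · rw [hvj, max_eq_right hcase]
        nlinarith only [sq_nonneg (w j - sstar),
          mul_pos (by linarith only [hj] : (0:ℝ) < γ - (sstar + c - w j))
            (by linarith only [hγpos, hcase] : (0:ℝ) < γ + (sstar + c - w j))]
    · have hjT' : j ∉ T := by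
        intro h
        rw [hT] at h
        obtain ⟨i, hi, hij⟩ := Finset.mem_image.mp h
        apply hjT
        rw [← hij, Equiv.symm_apply_apply]
        exact hi
      have hTsum' : ∑ ℓ ∈ T.erase j, (w ℓ - sstar)^2 = ε^2 - γ^2 := by
        rw [Finset.erase_eq_of_notMem hjT', hTsum]
      have hwjs : w j < sstar := by
        have := hout _ hjT
        rwa [Equiv.apply_symm_apply] at this
      rw [hTsum', hvj, max_eq_right (by linarith only [hwjs, hc_pos] : w j ≤ sstar + c)]
      nlinarith only [
        mul_pos (by linarith only [hj] : (0:ℝ) < γ - (sstar + c - w j))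
          (by linarith only [hγpos, hwjs, hc_pos] : (0:ℝ) < γ + (sstar + c - w j))]
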